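/- Let W be an n×n real symmetric positive definite matrix and S an n×r real matrix with full column rank. For every r×n real matrix G satisfying SGS = S, the matrix SGWGᵀSᵀ − S(SᵀW⁻¹S)⁻¹Sᵀ is positive semidefinite; that is, the minT choice G* = (SᵀW⁻¹S)⁻¹SᵀW⁻¹ minimizes the reconciled error covariance SGWGᵀSᵀ in the Loewner order over all mapping matrices satisfying the constraint SGS = S. -/

import Mathlib

open Matrix

lemma mulVec_injective_of_rank {n r : ℕ} (S : Matrix (Fin n) (Fin r) ℝ)
    (hS : S.rank = r) : Function.Injective S.mulVecLin := by
  rw [← LinearMap.ker_eq_bot, ← Submodule.finrank_eq_zero]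
  have h := S.mulVecLin.finrank_range_add_finrank_ker
  rw [Matrix.rank] at hS
  simp only [Module.finrank_fin_fun] at h
  omega

lemma gram_posDef {n r : ℕ} (W : Matrix (Fin n) (Fin n) ℝ)
    (S : Matrix (Fin n) (Fin r) ℝ) (hW : W.PosDef) (hS : S.rank = r) :
    (Sᵀ * W⁻¹ * S).PosDef := by
  have hWinv : W⁻¹.PosDef := hW.inv
  refine Matrix.PosDef.of_dotProduct_mulVec_pos ?_ ?_
  · have h := Matrix.isHermitian_conjTranspose_mul_mul S hWinv.isHermitian
    simpa [Matrix.conjTranspose_eq_transpose_of_trivial] using h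
  · intro x hx
    have hSx : S *ᵥ x ≠ 0 := by
      intro h
      apply hx
      have := mulVec_injective_of_rank S hS
      have h0 : S.mulVecLin x = S.mulVecLin 0 := by simpa using h
      exact this h0
    have := hWinv.dotProduct_mulVec_pos hSx
    simpa [Matrix.mul_assoc, ← Matrix.mulVec_mulVec, Matrix.dotProduct_mulVec,
      Matrix.vecMul_transpose] using this

/-- For every mapping matrix G with SGS = S, the difference
SGWGᵀSᵀ − S(SᵀW⁻¹S)⁻¹Sᵀ is positive semidefinite: the minT choice minimizes the
reconciled error covariance in the Loewner order. -/
theorem minT_loewner_optimal {n r : ℕ}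
    (W : Matrix (Fin n) (Fin n) ℝ) (S : Matrix (Fin n) (Fin r) ℝ)
    (hW : W.PosDef) (hS : S.rank = r) :
    ∀ G : Matrix (Fin r) (Fin n) ℝ, S * G * S = S →
      (S * G * W * Gᵀ * Sᵀ - S * (Sᵀ * W⁻¹ * S)⁻¹ * Sᵀ).PosSemidef := by
  intro G hG
  set M : Matrix (Fin r) (Fin r) ℝ := Sᵀ * W⁻¹ * S with hMdef
  have hM : M.PosDef := gram_posDef W S hW hS
  have hWinv : W⁻¹.PosDef := hW.inv
  have hWu : IsUnit W.det := hW.det_pos.ne'.isUnit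
  have hMu : IsUnit M.det := hM.det_pos.ne'.isUnit
  have hWW : W⁻¹ * W = 1 := Matrix.nonsing_inv_mul W hWu
  have hMM : M⁻¹ * M = 1 := Matrix.nonsing_inv_mul M hMu
  have hWsym : W⁻¹ᵀ = W⁻¹ := hWinv.isHermitian.eq
  have hMsym : M⁻¹ᵀ = M⁻¹ := hM.inv.isHermitian.eq
  set A : Matrix (Fin n) (Fin n) ℝ := S * G with hA
  set B : Matrix (Fin n) (Fin n) ℝ := S * M⁻¹ * Sᵀ * W⁻¹ with hB
  have hBT : Bᵀ = W⁻¹ * S * M⁻¹ * Sᵀ := by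
    simp [hB, transpose_mul, hWsym, hMsym, Matrix.mul_assoc]
  have key : (A - B) * W * (A - B)ᵀ
      = S * G * W * Gᵀ * Sᵀ - S * M⁻¹ * Sᵀ := by
    have hAWB : A * W * Bᵀ = S * M⁻¹ * Sᵀ := by
      rw [hBT, hA]
      calc S * G * W * (W⁻¹ * S * M⁻¹ * Sᵀ)
          = S * G * (W * W⁻¹) * S * M⁻¹ * Sᵀ := by
            simp only [Matrix.mul_assoc]
        _ = S * G * S * M⁻¹ * Sᵀ := by
            rw [Matrix.mul_nonsing_inv W hWu]; simp [Matrix.mul_assoc]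
        _ = S * M⁻¹ * Sᵀ := by rw [hG]
    have hBWA : B * W * Aᵀ = S * M⁻¹ * Sᵀ := by
      rw [hB, hA]
      have h1 : S * M⁻¹ * Sᵀ * W⁻¹ * W = S * M⁻¹ * Sᵀ := by
        simp only [Matrix.mul_assoc, hWW, Matrix.mul_one]
      rw [h1]
      have h2 : (S * G)ᵀ = Gᵀ * Sᵀ := by simp [transpose_mul]
      rw [h2]
      have h3 : Sᵀ * (Gᵀ * Sᵀ) = Sᵀ := by
        have h4 := congrArg transpose hG
        rw [transpose_mul, transpose_mul] at h4
        simpa [Matrix.mul_assoc] using h4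
      calc S * M⁻¹ * Sᵀ * (Gᵀ * Sᵀ) = S * M⁻¹ * (Sᵀ * (Gᵀ * Sᵀ)) := by
            simp only [Matrix.mul_assoc]
        _ = S * M⁻¹ * Sᵀ := by rw [h3]
    have hBWB : B * W * Bᵀ = S * M⁻¹ * Sᵀ := by
      rw [hB, hBT]
      have h1 : S * M⁻¹ * Sᵀ * W⁻¹ * W = S * M⁻¹ * Sᵀ := by
        simp only [Matrix.mul_assoc, hWW, Matrix.mul_one]
      rw [h1]
      calc S * M⁻¹ * Sᵀ * (W⁻¹ * S * M⁻¹ * Sᵀ)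
          = S * M⁻¹ * (Sᵀ * W⁻¹ * S) * M⁻¹ * Sᵀ := by
            simp only [Matrix.mul_assoc]
        _ = S * (M⁻¹ * M) * M⁻¹ * Sᵀ := by
            rw [← hMdef]; simp only [Matrix.mul_assoc]
        _ = S * M⁻¹ * Sᵀ := by rw [hMM]; simp [Matrix.mul_assoc]
    have hAWA : A * W * Aᵀ = S * G * W * Gᵀ * Sᵀ := by
      simp [hA, transpose_mul, Matrix.mul_assoc]
    have expand : (A - B) * W * (A - B)ᵀ
        = A * W * Aᵀ - A * W * Bᵀ - B * W * Aᵀ + B * W * Bᵀ := by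
      rw [transpose_sub]
      noncomm_ring
    rw [expand, hAWA, hAWB, hBWA, hBWB]
    abel
  rw [← key]
  have := hW.posSemidef.mul_mul_conjTranspose_same (A - B)
  simpa using this
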